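/- arXiv:1906.01208 — 3 statements merged into one kernel-verified Lean document; each statement's English description precedes it below -/
import Mathlib

section
/- There exist a probability space, a right-continuous filtration 𝔽, and two point processes Y, Z with ΔYΔZ = 0 identically, whose compensators Yᵖ, Zᵖ have a common jump, i.e., ΔYᵖ_t ΔZᵖ_t ≠ 0 for some t with positive probability. Concretely: let ℱ_t be trivial for t < 1 and ℱ_t = ℱ for t ≥ 1, let A, B ∈ ℱ be disjoint events with ℙ[A] > 0 and ℙ[B] > 0, and set Y_t = 1_A 1_{t≥1}, Z_t = 1_B 1_{t≥1}; then Yᵖ_t = ℙ[A] 1_{t≥1} and Zᵖ_t = ℙ[B] 1_{t≥1}, which jump together at t = 1. -/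
open Function Set MeasureTheory Filter
open scoped NNReal ENNReal
open scoped Topology

variable {Ω : Type*}

/-- Jump of an `ℕ`-valued path: `ΔX_t = X_t - X_{t-}`. -/
noncomputable def jmpN (f : ℝ≥0 → ℕ) (t : ℝ≥0) : ℕ := f t - Function.leftLim f t

/-- Jump of a real-valued path: `ΔA_t = A_t - A_{t-}`. -/
noncomputable def jmpR (f : ℝ≥0 → ℝ) (t : ℝ≥0) : ℝ := f t - Function.leftLim f t

/-- Pathwise covariation `[f,g]_t = ∑_{s≤t} Δf_s Δg_s` of two finite-variation paths. -/
noncomputable def brR (f g : ℝ≥0 → ℝ) (t : ℝ≥0) : ℝ :=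
  ∑ᶠ s ∈ Set.Iic t, jmpR f s * jmpR g s

/-- A point process with respect to the filtration `F`: an `ℕ`-valued adapted
increasing càdlàg process starting at `0` with jumps in `{0,1}`. -/
structure IsPointProc {mΩ : MeasurableSpace Ω} (F : Filtration ℝ≥0 mΩ)
    (X : ℝ≥0 → Ω → ℕ) : Prop where
  adapted : ∀ t : ℝ≥0, Measurable[F t] (X t)
  mono : ∀ ω, Monotone fun t => X t ω
  zero : ∀ ω, X 0 ω = 0
  rightCont : ∀ ω (t : ℝ≥0), ContinuousWithinAt (fun u => X u ω) (Set.Ici t) t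
  jumps : ∀ ω (t : ℝ≥0), jmpN (fun u => X u ω) t ≤ 1

/-- Local martingale: there is a localizing sequence of finite stopping times,
tending to infinity, along which the stopped process is a martingale. -/
def IsLocalMartingale {mΩ : MeasurableSpace Ω} (μ : Measure Ω)
    (F : Filtration ℝ≥0 mΩ) (M : ℝ≥0 → Ω → ℝ) : Prop :=
  ∃ τ : ℕ → Ω → ℝ≥0,
    (∀ n, IsStoppingTime F (fun ω => ((τ n ω : ℝ≥0) : WithTop ℝ≥0))) ∧
    (∀ ω, Tendsto (fun n => τ n ω) atTop atTop) ∧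
    (∀ n, Martingale (fun t ω => M (min t (τ n ω)) ω) F μ)

/-- The predictable σ-algebra on `ℝ≥0 × Ω` associated with the filtration `F`,
generated by the stochastic intervals `(s,t] × A`, `A ∈ F s`, and `{0} × A`, `A ∈ F 0`. -/
def predictableSigma {mΩ : MeasurableSpace Ω} (F : Filtration ℝ≥0 mΩ) :
    MeasurableSpace (ℝ≥0 × Ω) :=
  MeasurableSpace.generateFrom
    ({C | ∃ (s t : ℝ≥0) (A : Set Ω), s < t ∧ MeasurableSet[F s] A ∧ C = Set.Ioc s t ×ˢ A} ∪
     {C | ∃ A : Set Ω, MeasurableSet[F 0] A ∧ C = ({0} : Set ℝ≥0) ×ˢ A})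

/-- A process is predictable if it is measurable for the predictable σ-algebra. -/
def IsPredictable {mΩ : MeasurableSpace Ω} (F : Filtration ℝ≥0 mΩ)
    (M : ℝ≥0 → Ω → ℝ) : Prop :=
  Measurable[predictableSigma F] fun p : ℝ≥0 × Ω => M p.1 p.2

/-- `C` is the compensator (dual predictable projection) of the increasing process `A`:
`C` is predictable, increasing, càdlàg, starts at `0`, and `A - C` is a local martingale. -/
structure IsCompensatorOf {mΩ : MeasurableSpace Ω} (μ : Measure Ω)
    (F : Filtration ℝ≥0 mΩ) (C : ℝ≥0 → Ω → ℝ) (A : ℝ≥0 → Ω → ℝ) : Prop where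
  predictable : _root_.IsPredictable F C
  mono : ∀ ω, Monotone fun t => C t ω
  zero : ∀ ω, C 0 ω = 0
  rightCont : ∀ ω (t : ℝ≥0), ContinuousWithinAt (fun u => C u ω) (Set.Ici t) t
  locmart : IsLocalMartingale μ F fun t ω => A t ω - C t ω

open Classical

section Aux

open Function Set MeasureTheory Filter
open scoped NNReal ENNReal


/-- Right continuity of a step function jumping at `1`. -/
lemma stepRC {β : Type*} [TopologicalSpace β] (a b : β) (t : ℝ≥0) :
    ContinuousWithinAt (fun u : ℝ≥0 => if 1 ≤ u then a else b) (Set.Ici t) t := by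
  rcases le_or_gt 1 t with h | h
  · refine (continuousWithinAt_const (b := a)).congr (fun u hu => if_pos (h.trans hu)) (if_pos h)
  · have hev : (fun _ : ℝ≥0 => b) =ᶠ[𝓝[Set.Ici t] t]
        (fun u : ℝ≥0 => if 1 ≤ u then a else b) :=
      Filter.eventually_of_mem (mem_nhdsWithin_of_mem_nhds (Iio_mem_nhds h))
        (fun u hu => (if_neg (not_le.2 hu)).symm)
    have := (tendsto_const_nhds : Filter.Tendsto _ _ (𝓝 b)).congr' hev
    simpa [ContinuousWithinAt, if_neg (not_le.2 h)] using this

lemma step_leftLim {β : Type*} [TopologicalSpace β] [T2Space β] (a b : β) :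
    Function.leftLim (fun u : ℝ≥0 => if 1 ≤ u then a else b) 1 = b := by
  have h1 : (𝓝[<] (1:ℝ≥0)).NeBot := nhdsWithin_Iio_self_neBot' ⟨0, Set.mem_Iio.2 one_pos⟩
  refine leftLim_eq_of_tendsto ?_
  refine (tendsto_const_nhds : Filter.Tendsto (fun _ : ℝ≥0 => b) _ _).congr' ?_
  exact Filter.eventually_of_mem self_mem_nhdsWithin
    (fun u hu => (if_neg (not_le.2 hu)).symm)

end Aux

section CE2

open Function Set MeasureTheory Filter
open scoped NNReal ENNReal Topology

/-- The two-point probability space: fair coin on `Bool`. -/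
noncomputable def ceμ : Measure Bool :=
  (2:ℝ≥0∞)⁻¹ • (Measure.dirac true + Measure.dirac false)

instance : IsProbabilityMeasure ceμ := by
  constructor
  simp only [ceμ, Measure.smul_apply, Measure.add_apply, measure_univ, smul_eq_mul]
  rw [one_add_one_eq_two, ENNReal.inv_mul_cancel two_ne_zero ENNReal.ofNat_ne_top]

lemma ceμ_true : ceμ {true} = 2⁻¹ := by
  simp [ceμ, Measure.dirac_apply]

lemma ceμ_false : ceμ {false} = 2⁻¹ := by
  simp [ceμ, Measure.dirac_apply]

lemma ceμ_integral (f : Bool → ℝ) : ∫ ω, f ω ∂ceμ = 2⁻¹ * (f true + f false) := by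
  rw [ceμ, integral_smul_measure,
    integral_add_measure Integrable.of_finite Integrable.of_finite,
    integral_dirac, integral_dirac]
  simp [ENNReal.toReal_inv]

/-- The filtration: trivial before time 1, full afterwards. -/
noncomputable def ceF : Filtration ℝ≥0 Bool.instMeasurableSpace where
  seq t := if 1 ≤ t then ⊤ else ⊥
  mono' := by
    intro s t hst
    dsimp only
    split_ifs with h1 h2
    · exact le_rfl
    · exact absurd (h1.trans hst) h2
    · exact bot_le
    · exact le_rfl
  le' := by
    intro t
    split_ifs
    · exact le_of_eq rfl
    · exact bot_le

lemma ceF_apply (t : ℝ≥0) : ceF t = if 1 ≤ t then (⊤ : MeasurableSpace Bool) else ⊥ := rfl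

lemma ceF_top {t : ℝ≥0} (h : 1 ≤ t) : ceF t = (⊤ : MeasurableSpace Bool) := by
  rw [ceF_apply, if_pos h]

lemma ceF_bot {t : ℝ≥0} (h : ¬ 1 ≤ t) : ceF t = (⊥ : MeasurableSpace Bool) := by
  rw [ceF_apply, if_neg h]

/-- The set `{t ≥ 1} × Ω` is predictable. -/
lemma ce_pred_set : MeasurableSet[predictableSigma ceF] {p : ℝ≥0 × Bool | 1 ≤ p.1} := by
  have key : {p : ℝ≥0 × Bool | 1 ≤ p.1} =
      ⋂ n : ℕ, ⋃ m : ℕ,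
        (Set.Ioc (1 - ((n:ℝ≥0)+1)⁻¹) ((m:ℝ≥0)+1)) ×ˢ (Set.univ : Set Bool) := by
    ext p
    simp only [Set.mem_setOf_eq, Set.mem_iInter, Set.mem_iUnion, Set.mem_prod, Set.mem_Ioc,
      Set.mem_univ, and_true]
    constructor
    · intro h n
      obtain ⟨m, hm⟩ := exists_nat_ge p.1
      exact ⟨m, lt_of_lt_of_le (tsub_lt_self one_pos (by positivity)) h,
        hm.trans (le_add_of_nonneg_right zero_le)⟩
    · intro h
      by_contra hlt
      push_neg at hlt
      obtain ⟨n, hn⟩ := exists_nat_one_div_lt (K := ℝ≥0) (tsub_pos_of_lt hlt)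
      obtain ⟨m, hm1, _⟩ := h n
      rw [one_div] at hn
      have hinv1 : ((n:ℝ≥0)+1)⁻¹ ≤ 1 := by
        rw [inv_le_one_iff₀]
        right; exact le_add_self
      have h1 : p.1 + ((n:ℝ≥0)+1)⁻¹ < 1 := lt_tsub_iff_left.1 hn
      have h2 : (1:ℝ≥0) < p.1 + ((n:ℝ≥0)+1)⁻¹ := (tsub_lt_iff_right hinv1).1 hm1
      exact absurd h1 (lt_asymm h2)
  rw [key]
  refine MeasurableSet.iInter fun n => MeasurableSet.iUnion fun m => ?_
  refine MeasurableSpace.measurableSet_generateFrom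
    (Or.inl ⟨1 - ((n:ℝ≥0)+1)⁻¹, (m:ℝ≥0)+1, Set.univ, ?_, MeasurableSet.univ, rfl⟩)
  exact (tsub_lt_self one_pos (by positivity)).trans_le le_add_self

/-- Deterministic step processes jumping at 1 with centered jump are martingales. -/
lemma ce_mart (g : Bool → ℝ) (hg : ∫ ω, g ω ∂ceμ = 0) :
    Martingale (fun (t : ℝ≥0) (ω : Bool) => if 1 ≤ t then g ω else 0) ceF ceμ := by
  constructor
  · intro t
    by_cases h : 1 ≤ t
    · rw [ceF_top h]
      exact measurable_from_top.stronglyMeasurable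
    · simp only [if_neg h]
      exact stronglyMeasurable_const
  · intro i j hij
    show ceμ[(fun ω : Bool => if 1 ≤ j then g ω else 0)|ceF i] =ᶠ[ae ceμ]
      fun ω : Bool => if 1 ≤ i then g ω else 0
    by_cases hj : 1 ≤ j
    · by_cases hi : 1 ≤ i
      · rw [ceF_top hi]
        have hle : (⊤ : MeasurableSpace Bool) ≤ Bool.instMeasurableSpace := le_of_eq rfl
        rw [condExp_of_stronglyMeasurable hle measurable_from_top.stronglyMeasurable
          Integrable.of_finite]
        exact Filter.EventuallyEq.of_eq (funext fun ω => by simp [hj, hi])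
      · rw [ceF_bot hi, condExp_bot]
        refine Filter.EventuallyEq.of_eq (funext fun ω => ?_)
        simp only [if_pos hj, if_neg hi]
        exact hg
    · have hi : ¬ 1 ≤ i := fun h => hj (h.trans hij)
      have hzero : (fun ω : Bool => if (1:ℝ≥0) ≤ j then g ω else 0) = (0 : Bool → ℝ) :=
        funext fun ω => if_neg hj
      rw [hzero, condExp_zero]
      exact Filter.EventuallyEq.of_eq (funext fun ω => (if_neg hi).symm)

end CE2

section CE3

open Function Set MeasureTheory Filter
open scoped NNReal ENNReal Topology

lemma jmpN_zero_of (f : ℝ≥0 → ℕ) (h : f t = 0) : jmpN f t = 0 := by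
  unfold jmpN
  rw [h]
  exact Nat.zero_sub _

/-- The point process `1_A 1_{t ≥ 1}`. -/
noncomputable def ceYgen (A : Set Bool) : ℝ≥0 → Bool → ℕ :=
  fun t ω => if ω ∈ A ∧ 1 ≤ t then 1 else 0

lemma ce_pointProc (A : Set Bool) :
    IsPointProc ceF (fun t ω => if ω ∈ A ∧ 1 ≤ t then 1 else 0) := by
  constructor
  · intro t
    by_cases h : 1 ≤ t
    · rw [ceF_top h]
      exact measurable_from_top
    · have he : (fun ω => if ω ∈ A ∧ 1 ≤ t then (1:ℕ) else 0) = fun _ => 0 :=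
        funext fun ω => if_neg fun hc => h hc.2
      rw [he]
      exact measurable_const
  · intro ω a b hab
    dsimp only
    split_ifs with h1 h2
    · exact le_rfl
    · exact absurd ⟨h1.1, h1.2.trans hab⟩ h2
    · exact Nat.zero_le _
    · exact le_rfl
  · intro ω
    exact if_neg fun hc => absurd hc.2 (not_le.2 zero_lt_one)
  · intro ω t
    have he : (fun u => if ω ∈ A ∧ 1 ≤ u then (1:ℕ) else 0)
        = fun u : ℝ≥0 => if 1 ≤ u then (if ω ∈ A then 1 else 0) else 0 := by
      funext u; by_cases h : ω ∈ A <;> simp [h]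
    rw [he]
    exact stepRC _ _ t
  · intro ω t
    refine le_trans (Nat.sub_le _ _) ?_
    dsimp only
    split_ifs <;> simp

lemma ceμ_single (b : Bool) : ceμ {b} = 2⁻¹ := by
  cases b
  · exact ceμ_false
  · exact ceμ_true

lemma ce_int_zero (b : Bool) :
    ∫ ω, ((if ω ∈ ({b} : Set Bool) then (1:ℝ) else 0) - (ceμ {b}).toReal) ∂ceμ = 0 := by
  rw [ceμ_integral, ceμ_single]
  cases b <;> norm_num [ENNReal.toReal_inv]

set_option maxHeartbeats 2000000 in
lemma ce_comp (b : Bool) :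
    IsCompensatorOf ceμ ceF (fun t _ => if 1 ≤ t then (ceμ {b}).toReal else 0)
      (fun t ω => ((ceYgen {b} t ω : ℕ) : ℝ)) := by
  constructor
  · exact Measurable.ite ce_pred_set measurable_const measurable_const
  · intro ω a c hac
    dsimp only
    split_ifs with h1 h2
    · exact le_rfl
    · exact absurd (h1.trans hac) h2
    · exact ENNReal.toReal_nonneg
    · exact le_rfl
  · intro ω
    exact if_neg (not_le.2 zero_lt_one)
  · intro ω t
    exact stepRC _ _ t
  · refine ⟨fun n _ => (n:ℝ≥0) + 1, fun n => ?_, fun ω => ?_, fun n => ?_⟩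
    · exact isStoppingTime_const ceF ((n:ℝ≥0)+1)
    · show Tendsto (fun n : ℕ => (n:ℝ≥0)+1) atTop atTop
      exact tendsto_atTop_mono (fun m => le_add_of_nonneg_right zero_le)
        tendsto_natCast_atTop_atTop
    have key : (fun (t:ℝ≥0) (ω:Bool) =>
        ((ceYgen {b} (min t ((n:ℝ≥0)+1)) ω : ℕ) : ℝ)
          - (if 1 ≤ min t ((n:ℝ≥0)+1) then (ceμ {b}).toReal else 0))
        = fun (t:ℝ≥0) (ω:Bool) =>
            if 1 ≤ t then ((if ω ∈ ({b} : Set Bool) then (1:ℝ) else 0) - (ceμ {b}).toReal)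
            else 0 := by
      funext t ω
      have hmin : (1:ℝ≥0) ≤ min t ((n:ℝ≥0)+1) ↔ 1 ≤ t := by
        rw [le_min_iff]
        exact and_iff_left le_add_self
      by_cases ht : 1 ≤ t <;> by_cases hω : ω ∈ ({b} : Set Bool) <;>
        simp [ceYgen, ht, hω, hmin]
    show Martingale (fun (t:ℝ≥0) (ω:Bool) =>
        ((ceYgen {b} (min t ((n:ℝ≥0)+1)) ω : ℕ) : ℝ)
          - (if 1 ≤ min t ((n:ℝ≥0)+1) then (ceμ {b}).toReal else 0)) ceF ceμ
    rw [key]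
    exact ce_mart _ (ce_int_zero b)

end CE3

/-- Counterexample A.2: there exist a probability space, a
right-continuous filtration and two point processes with no common jumps whose
compensators have a common jump (at `t = 1`): `Y = 1_A 1_{t≥1}`, `Z = 1_B 1_{t≥1}`
for disjoint events `A`, `B` of positive probability, with compensators
`ℙ[A] 1_{t≥1}` and `ℙ[B] 1_{t≥1}`. -/
theorem exists_no_common_jumps_but_compensators_jump_together :
    ∃ (Ω : Type) (mΩ : MeasurableSpace Ω) (μ : Measure Ω)
      (F : Filtration ℝ≥0 mΩ) (Y Z : ℝ≥0 → Ω → ℕ) (Yp Zp : ℝ≥0 → Ω → ℝ),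
      IsProbabilityMeasure μ ∧
      (∀ t : ℝ≥0, F t = ⨅ s ∈ Set.Ioi t, F s) ∧
      IsPointProc F Y ∧ IsPointProc F Z ∧
      IsCompensatorOf μ F Yp (fun t ω => (Y t ω : ℝ)) ∧
      IsCompensatorOf μ F Zp (fun t ω => (Z t ω : ℝ)) ∧
      (∀ ω (t : ℝ≥0), jmpN (fun u => Y u ω) t * jmpN (fun u => Z u ω) t = 0) ∧
      (∃ A B : Set Ω, MeasurableSet A ∧ MeasurableSet B ∧ Disjoint A B ∧
        0 < μ A ∧ 0 < μ B ∧
        (∀ (t : ℝ≥0) ω, Y t ω = if ω ∈ A ∧ 1 ≤ t then 1 else 0) ∧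
        (∀ (t : ℝ≥0) ω, Z t ω = if ω ∈ B ∧ 1 ≤ t then 1 else 0) ∧
        (∀ (t : ℝ≥0) ω, Yp t ω = if 1 ≤ t then (μ A).toReal else 0) ∧
        (∀ (t : ℝ≥0) ω, Zp t ω = if 1 ≤ t then (μ B).toReal else 0)) ∧
      (∀ ω, jmpR (fun u => Yp u ω) 1 * jmpR (fun u => Zp u ω) 1 ≠ 0) := by

  refine ⟨Bool, Bool.instMeasurableSpace, ceμ, ceF, ceYgen {true}, ceYgen {false},
    (fun t _ => if 1 ≤ t then (ceμ {true}).toReal else 0),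
    (fun t _ => if 1 ≤ t then (ceμ {false}).toReal else 0),
    inferInstance, ?_, ce_pointProc {true}, ce_pointProc {false},
    ce_comp true, ce_comp false, ?_, ?_, ?_⟩
  · -- right-continuity of the filtration
    intro t
    rcases le_or_gt 1 t with h | h
    · refine le_antisymm (le_iInf₂ fun s hs => ceF.mono (le_of_lt hs)) ?_
      rw [ceF_top h]
      exact le_top
    · refine le_antisymm (le_iInf₂ fun s hs => ceF.mono (le_of_lt hs)) ?_
      obtain ⟨s₀, hs1, hs2⟩ := exists_between h
      refine le_trans (iInf₂_le s₀ (Set.mem_Ioi.2 hs1)) (le_of_eq ?_)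
      rw [ceF_bot (not_le.2 hs2), ceF_bot (not_le.2 h)]
  · -- no common jumps
    intro ω t
    cases ω
    · rw [jmpN_zero_of (fun u => ceYgen {true} u false) (by simp [ceYgen]), zero_mul]
    · rw [jmpN_zero_of (fun u => ceYgen {false} u true) (by simp [ceYgen]), mul_zero]
  · -- the concrete description
    refine ⟨{true}, {false}, measurableSet_singleton _, measurableSet_singleton _, by simp,
      ?_, ?_, fun t ω => rfl, fun t ω => rfl, fun t ω => rfl, fun t ω => rfl⟩
    · rw [ceμ_true]
      simp
    · rw [ceμ_false]
      simp
  · -- compensators jump together at time 1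
    intro ω
    have hY : jmpR (fun u : ℝ≥0 => if 1 ≤ u then (ceμ {true}).toReal else 0) 1
        = (ceμ {true}).toReal := by
      unfold jmpR
      rw [step_leftLim]
      simp
    have hZ : jmpR (fun u : ℝ≥0 => if 1 ≤ u then (ceμ {false}).toReal else 0) 1
        = (ceμ {false}).toReal := by
      unfold jmpR
      rw [step_leftLim]
      simp
    rw [hY, hZ, ceμ_true, ceμ_false]
    norm_num [ENNReal.toReal_inv]
end

section
/- Let M and N be square-integrable martingales on a common probability space, M adapted to a filtration 𝔽 and N adapted to a filtration ℍ, with 𝔽_∞ and ℍ_∞ independent. Then M and N are both martingales with respect to the filtration 𝔾 with 𝒢_t = σ(ℱ_t ∪ ℋ_t), and the product MN is a 𝔾-martingale. -/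
open MeasureTheory ProbabilityTheory
open scoped NNReal

/-- The filtration `𝔾` with `𝒢_t = σ(ℱ_t ∪ ℋ_t)`. -/
def joinFiltration {Ω : Type*} {mΩ : MeasurableSpace Ω}
    (F H : Filtration ℝ≥0 mΩ) : Filtration ℝ≥0 mΩ where
  seq t := F t ⊔ H t
  mono' := fun _ _ hst => sup_le_sup (F.mono hst) (H.mono hst)
  le' := fun t => sup_le (F.le t) (H.le t)

section Aux

/-- If two σ-algebras are independent, then for measurable functions the integral over a
rectangle factors. -/
lemma rect_integral_aux {Ω : Type*} {m₁ m₂ : MeasurableSpace Ω} {mΩ : MeasurableSpace Ω}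
    {μ : Measure Ω} [IsProbabilityMeasure μ]
    (hle₁ : m₁ ≤ mΩ) (hle₂ : m₂ ≤ mΩ)
    (hindep : Indep m₁ m₂ μ) {X Y : Ω → ℝ}
    (hX : Measurable[m₁] X) (hY : Measurable[m₂] Y)
    (hXi : Integrable X μ) (hYi : Integrable Y μ)
    {A B : Set Ω} (hA : MeasurableSet[m₁] A) (hB : MeasurableSet[m₂] B) :
    ∫ x in A ∩ B, X x * Y x ∂μ = (∫ x in A, X x ∂μ) * ∫ x in B, Y x ∂μ := by
  have hif : IndepFun (A.indicator X) (B.indicator Y) μ :=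
    indep_of_indep_of_le_right
      (indep_of_indep_of_le_left hindep (Measurable.comap_le (hX.indicator hA)))
      (Measurable.comap_le (hY.indicator hB))
  calc ∫ x in A ∩ B, X x * Y x ∂μ
      = ∫ x, (A ∩ B).indicator (fun x => X x * Y x) x ∂μ :=
        (integral_indicator (((hle₁ _ hA).inter (hle₂ _ hB) : MeasurableSet[mΩ] (A ∩ B)))).symm
    _ = ∫ x, A.indicator X x * B.indicator Y x ∂μ := by
        congr 1; funext x; exact Set.inter_indicator_mul X Y x
    _ = (∫ x, A.indicator X x ∂μ) * ∫ x, B.indicator Y x ∂μ :=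
        IndepFun.integral_mul_eq_mul_integral hif (hXi.indicator (hle₁ _ hA : MeasurableSet[mΩ] A)).aestronglyMeasurable
          (hYi.indicator (hle₂ _ hB : MeasurableSet[mΩ] B)).aestronglyMeasurable
    _ = (∫ x in A, X x ∂μ) * ∫ x in B, Y x ∂μ := by
        rw [integral_indicator (hle₁ _ hA : MeasurableSet[mΩ] A), integral_indicator (hle₂ _ hB : MeasurableSet[mΩ] B)]

/-- If two integrable functions have the same integrals over all "rectangles" `A ∩ B` with
`A ∈ m'`, `B ∈ m₂`, then they have the same integrals over all sets in `m' ⊔ m₂`. -/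
lemma setIntegral_eq_of_rect {Ω : Type*} {m' m₂ : MeasurableSpace Ω} {mΩ : MeasurableSpace Ω}
    {μ : Measure Ω} [IsProbabilityMeasure μ] (hle : m' ⊔ m₂ ≤ mΩ)
    {f g : Ω → ℝ} (hfint : Integrable f μ) (hgint : Integrable g μ)
    (hbasic : ∀ A B, MeasurableSet[m'] A → MeasurableSet[m₂] B →
      ∫ x in A ∩ B, f x ∂μ = ∫ x in A ∩ B, g x ∂μ) :
    ∀ s, MeasurableSet[m' ⊔ m₂] s → ∫ x in s, f x ∂μ = ∫ x in s, g x ∂μ := by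
  set S : Set (Set Ω) :=
    {s | ∃ A B, MeasurableSet[m'] A ∧ MeasurableSet[m₂] B ∧ s = A ∩ B} with hS
  have h_eq : (m' ⊔ m₂) = MeasurableSpace.generateFrom S := by
    refine le_antisymm (sup_le ?_ ?_) (MeasurableSpace.generateFrom_le ?_)
    · intro A hA
      exact MeasurableSpace.measurableSet_generateFrom
        ⟨A, Set.univ, hA, MeasurableSet.univ, (Set.inter_univ A).symm⟩
    · intro B hB
      exact MeasurableSpace.measurableSet_generateFrom
        ⟨Set.univ, B, MeasurableSet.univ, hB, (Set.univ_inter B).symm⟩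
    · rintro s ⟨A, B, hA, hB, rfl⟩
      exact MeasurableSet.inter ((le_sup_left : m' ≤ m' ⊔ m₂) _ hA)
        ((le_sup_right : m₂ ≤ m' ⊔ m₂) _ hB)
  have h_pi : IsPiSystem S := by
    rintro s ⟨A, B, hA, hB, rfl⟩ t ⟨A', B', hA', hB', rfl⟩ -
    exact ⟨A ∩ A', B ∩ B', hA.inter hA', hB.inter hB', by
      rw [Set.inter_inter_inter_comm]⟩
  have h_univ : ∫ x, f x ∂μ = ∫ x, g x ∂μ := by
    have := hbasic Set.univ Set.univ MeasurableSet.univ MeasurableSet.univ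
    simpa using this
  intro s hs
  refine MeasurableSpace.induction_on_inter (m := m' ⊔ m₂)
    (C := fun s _ => ∫ x in s, f x ∂μ = ∫ x in s, g x ∂μ) h_eq h_pi ?_ ?_ ?_ ?_ s hs
  · simp
  · rintro t ⟨A, B, hA, hB, rfl⟩
    exact hbasic A B hA hB
  · intro t htm ht
    rw [setIntegral_compl (hle _ htm : MeasurableSet[mΩ] t) hfint,
      setIntegral_compl (hle _ htm : MeasurableSet[mΩ] t) hgint,
      ht, h_univ]
  · intro u hdisj hum hu
    rw [integral_iUnion (fun i => (hle _ (hum i) : MeasurableSet[mΩ] (u i))) hdisj hfint.integrableOn,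
      integral_iUnion (fun i => (hle _ (hum i) : MeasurableSet[mΩ] (u i))) hdisj hgint.integrableOn]
    exact tsum_congr fun i => hu i

/-- Characterization of the conditional expectation with respect to `m' ⊔ m₂` via integrals
over rectangles. -/
lemma condexp_join_eq {Ω : Type*} {m' m₂ : MeasurableSpace Ω} {mΩ : MeasurableSpace Ω}
    {μ : Measure Ω} [IsProbabilityMeasure μ] (hle : m' ⊔ m₂ ≤ mΩ)
    {f g : Ω → ℝ} (hfint : Integrable f μ) (hgint : Integrable g μ)
    (hgm : StronglyMeasurable[m' ⊔ m₂] g)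
    (hbasic : ∀ A B, MeasurableSet[m'] A → MeasurableSet[m₂] B →
      ∫ x in A ∩ B, g x ∂μ = ∫ x in A ∩ B, f x ∂μ) :
    μ[f | m' ⊔ m₂] =ᵐ[μ] g := by
  have := ae_eq_condExp_of_forall_setIntegral_eq hle hfint
    (fun s _ _ => hgint.integrableOn)
    (fun s hs _ => setIntegral_eq_of_rect hle hgint hfint hbasic s hs)
    (StronglyMeasurable.aestronglyMeasurable hgm)
  exact this.symm

end Aux

/-- if `M` is a square-integrable `𝔽`-martingale and `N` a
square-integrable `ℍ`-martingale with `ℱ_∞` and `ℋ_∞` independent, then `M`, `N` and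
the product `MN` are all martingales with respect to `𝒢_t = σ(ℱ_t ∪ ℋ_t)`. -/
theorem product_martingale_of_independent_filtrations
    {Ω : Type*} {mΩ : MeasurableSpace Ω} (μ : Measure Ω) [IsProbabilityMeasure μ]
    (F H : Filtration ℝ≥0 mΩ)
    (hindep : Indep (⨆ t : ℝ≥0, (F t : MeasurableSpace Ω))
      (⨆ t : ℝ≥0, (H t : MeasurableSpace Ω)) μ)
    (M N : ℝ≥0 → Ω → ℝ)
    (hM : Martingale M F μ) (hN : Martingale N H μ)
    (hM2 : ∀ t : ℝ≥0, MemLp (M t) 2 μ) (hN2 : ∀ t : ℝ≥0, MemLp (N t) 2 μ) :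
    Martingale M (joinFiltration F H) μ ∧
    Martingale N (joinFiltration F H) μ ∧
    Martingale (fun t ω => M t ω * N t ω) (joinFiltration F H) μ := by
  set m₁ : MeasurableSpace Ω := ⨆ t : ℝ≥0, (F t : MeasurableSpace Ω) with hm₁
  set m₂ : MeasurableSpace Ω := ⨆ t : ℝ≥0, (H t : MeasurableSpace Ω) with hm₂
  have hle₁ : m₁ ≤ mΩ := iSup_le fun t => F.le t
  have hle₂ : m₂ ≤ mΩ := iSup_le fun t => H.le t
  have hFm : ∀ t, (F t : MeasurableSpace Ω) ≤ m₁ := fun t =>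
    le_iSup (fun t : ℝ≥0 => (F t : MeasurableSpace Ω)) t
  have hHm : ∀ t, (H t : MeasurableSpace Ω) ≤ m₂ := fun t =>
    le_iSup (fun t : ℝ≥0 => (H t : MeasurableSpace Ω)) t
  have hMmeas : ∀ t, Measurable[m₁] (M t) := fun t =>
    ((hM.stronglyAdapted t).mono (hFm t)).measurable
  have hNmeas : ∀ t, Measurable[m₂] (N t) := fun t =>
    ((hN.stronglyAdapted t).mono (hHm t)).measurable
  have hMi : ∀ t, Integrable (M t) μ := fun t => hM.integrable t
  have hNi : ∀ t, Integrable (N t) μ := fun t => hN.integrable t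
  -- integrability of the products
  have hMNindep : ∀ s t, IndepFun (M s) (N t) μ := fun s t =>
    indep_of_indep_of_le_right
      (indep_of_indep_of_le_left hindep (Measurable.comap_le (hMmeas s)))
      (Measurable.comap_le (hNmeas t))
  have hMNi : ∀ t, Integrable (fun ω => M t ω * N t ω) μ := fun t =>
    (hMNindep t t).integrable_mul (hMi t) (hNi t)
  have hGle : ∀ t : ℝ≥0, (F t ⊔ H t : MeasurableSpace Ω) ≤ mΩ := fun t =>
    sup_le (F.le t) (H.le t)
  -- rectangle integral computations
  have key : ∀ (s t : ℝ≥0), s ≤ t → ∀ A B, MeasurableSet[(F s : MeasurableSpace Ω)] A →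
      MeasurableSet[(H s : MeasurableSpace Ω)] B →
      ∫ x in A ∩ B, M s x * N s x ∂μ = ∫ x in A ∩ B, M t x * N t x ∂μ := by
    intro s t hst A B hA hB
    rw [rect_integral_aux hle₁ hle₂ hindep (hMmeas s) (hNmeas s) (hMi s) (hNi s)
        (hFm s _ hA) (hHm s _ hB),
      rect_integral_aux hle₁ hle₂ hindep (hMmeas t) (hNmeas t) (hMi t) (hNi t)
        (hFm s _ hA) (hHm s _ hB),
      hM.setIntegral_eq hst hA, hN.setIntegral_eq hst hB]
  have keyM : ∀ (s t : ℝ≥0), s ≤ t → ∀ A B, MeasurableSet[(F s : MeasurableSpace Ω)] A →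
      MeasurableSet[(H s : MeasurableSpace Ω)] B →
      ∫ x in A ∩ B, M s x ∂μ = ∫ x in A ∩ B, M t x ∂μ := by
    intro s t hst A B hA hB
    have h1 : ∀ (u : ℝ≥0), ∫ x in A ∩ B, M u x ∂μ = ∫ x in A ∩ B, M u x * (1 : ℝ) ∂μ := by
      intro u; simp
    rw [h1 s, h1 t,
      rect_integral_aux hle₁ hle₂ hindep (hMmeas s) measurable_const (hMi s)
        (integrable_const 1) (hFm s _ hA) (hHm s _ hB),
      rect_integral_aux hle₁ hle₂ hindep (hMmeas t) measurable_const (hMi t)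
        (integrable_const 1) (hFm s _ hA) (hHm s _ hB),
      hM.setIntegral_eq hst hA]
  have keyN : ∀ (s t : ℝ≥0), s ≤ t → ∀ A B, MeasurableSet[(F s : MeasurableSpace Ω)] A →
      MeasurableSet[(H s : MeasurableSpace Ω)] B →
      ∫ x in A ∩ B, N s x ∂μ = ∫ x in A ∩ B, N t x ∂μ := by
    intro s t hst A B hA hB
    have h1 : ∀ (u : ℝ≥0), ∫ x in A ∩ B, N u x ∂μ = ∫ x in A ∩ B, (1 : ℝ) * N u x ∂μ := by
      intro u; simp
    rw [h1 s, h1 t,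
      rect_integral_aux hle₁ hle₂ hindep measurable_const (hNmeas s)
        (integrable_const 1) (hNi s) (hFm s _ hA) (hHm s _ hB),
      rect_integral_aux hle₁ hle₂ hindep measurable_const (hNmeas t)
        (integrable_const 1) (hNi t) (hFm s _ hA) (hHm s _ hB),
      hN.setIntegral_eq hst hB]
  refine ⟨⟨fun t => (hM.stronglyAdapted t).mono le_sup_left, fun s t hst => ?_⟩,
    ⟨fun t => (hN.stronglyAdapted t).mono le_sup_right, fun s t hst => ?_⟩,
    ⟨fun t => ((hM.stronglyAdapted t).mono le_sup_left).mul ((hN.stronglyAdapted t).mono le_sup_right),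
      fun s t hst => ?_⟩⟩
  · exact condexp_join_eq (hGle s) (hMi t) (hMi s)
      ((hM.stronglyAdapted s).mono le_sup_left) (fun A B hA hB => keyM s t hst A B hA hB)
  · exact condexp_join_eq (hGle s) (hNi t) (hNi s)
      ((hN.stronglyAdapted s).mono le_sup_right) (fun A B hA hB => keyN s t hst A B hA hB)
  · exact condexp_join_eq (hGle s) (hMNi t) (hMNi s)
      (((hM.stronglyAdapted s).mono le_sup_left).mul ((hN.stronglyAdapted s).mono le_sup_right))
      (fun A B hA hB => key s t hst A B hA hB)
end

section
/- Let X be a Poisson process with jump times τ₁ < τ₂ < ⋯ and let τ = (τ₁ + τ₂)/2. In the progressive enlargement 𝔾 of the natural filtration of X by the random time τ, the stopping time τ₂ is 𝔾-predictable: the sequence σₙ := (2τ − τ₁) − 1/n ∨ τ₁ (suitably defined on {τ₁ < ∞}) announces τ₂, since τ₂ = 2τ − τ₁ is 𝒢_τ-measurable and τ ≤ τ₂ with τ < τ₂ a.s.; consequently X charges a 𝔾-predictable time and is not quasi-left continuous in 𝔾. -/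
open Function Set MeasureTheory Filter
open scoped NNReal ENNReal

/-- Counterexample 4.10: let `X` be a Poisson process with jump times
`τ₁ < τ₂ < ⋯` and `τ = (τ₁ + τ₂)/2`. In the progressive enlargement `𝔾` of the natural
filtration of `X` by `τ` (the smallest right-continuous filtration to which `X` is
adapted and making `τ` a stopping time), the time `τ₂` is `𝔾`-predictable: it admits an
announcing sequence of `𝔾`-stopping times; consequently `X` charges a `𝔾`-predictable
time (`ΔX_{τ₂} = 1`) and is not quasi-left continuous in `𝔾`. -/
theorem poisson_second_jump_predictable_in_enlargement
    {Ω : Type*} {mΩ : MeasurableSpace Ω} (μ : Measure Ω) [IsProbabilityMeasure μ]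
    (X : ℝ≥0 → Ω → ℕ) (lam : ℝ) (hlam : 0 < lam)
    -- `X` is a point process with Poisson marginals of rate `lam`:
    (hmeas : ∀ t : ℝ≥0, Measurable (X t))
    (hmono : ∀ ω, Monotone fun t => X t ω)
    (h0 : ∀ ω, X 0 ω = 0)
    (hrc : ∀ ω (t : ℝ≥0), ContinuousWithinAt (fun u => X u ω) (Set.Ici t) t)
    (hjumps : ∀ ω (t : ℝ≥0), jmpN (fun u => X u ω) t ≤ 1)
    (hpoisson : ∀ s t : ℝ≥0, s ≤ t → ∀ k : ℕ,
      μ {ω | X t ω - X s ω = k}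
        = ENNReal.ofReal (Real.exp (-(lam * ((t : ℝ) - s))) *
            (lam * ((t : ℝ) - s)) ^ k / Nat.factorial k))
    -- `τ₁ < τ₂` are the first two jump times of `X`, with `ΔX_{τ₂} = 1`:
    (τ1 τ2 : Ω → ℝ≥0)
    (hτlt : ∀ ω, 0 < τ1 ω ∧ τ1 ω < τ2 ω)
    (hτ1 : ∀ (t : ℝ≥0) ω, τ1 ω ≤ t ↔ 1 ≤ X t ω)
    (hτ2 : ∀ (t : ℝ≥0) ω, τ2 ω ≤ t ↔ 2 ≤ X t ω)
    (hjump2 : ∀ ω, jmpN (fun u => X u ω) (τ2 ω) = 1)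
    -- `𝔾` is the progressive enlargement of the natural filtration of `X` by
    -- `τ = (τ₁+τ₂)/2`: the smallest right-continuous filtration to which `X` is
    -- adapted and for which `τ` is a stopping time:
    (G : Filtration ℝ≥0 mΩ)
    (hGrc : ∀ t : ℝ≥0, G t = ⨅ s ∈ Set.Ioi t, G s)
    (hGX : ∀ t : ℝ≥0, Measurable[G t] (X t))
    (hGτ : IsStoppingTime G fun ω => (((τ1 ω + τ2 ω) / 2 : ℝ≥0) : WithTop ℝ≥0))
    (hGmin : ∀ G' : Filtration ℝ≥0 mΩ,
      (∀ t : ℝ≥0, G' t = ⨅ s ∈ Set.Ioi t, G' s) →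
      (∀ t : ℝ≥0, Measurable[G' t] (X t)) →
      IsStoppingTime G' (fun ω => (((τ1 ω + τ2 ω) / 2 : ℝ≥0) : WithTop ℝ≥0)) →
      ∀ t : ℝ≥0, G t ≤ G' t) :
    -- `τ₂` is `𝔾`-predictable: it is announced by a sequence of `𝔾`-stopping times …
    (∃ σ : ℕ → Ω → ℝ≥0,
      (∀ n, IsStoppingTime G (fun ω => ((σ n ω : ℝ≥0) : WithTop ℝ≥0))) ∧
      (∀ ω, Monotone fun n => σ n ω) ∧
      (∀ ω, Tendsto (fun n => σ n ω) atTop (nhds (τ2 ω))) ∧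
      (∀ n ω, σ n ω < τ2 ω)) ∧
    -- … and `X` charges `τ₂`, so `X` is not quasi-left continuous in `𝔾`:
    0 < μ {ω | jmpN (fun u => X u ω) (τ2 ω) ≠ 0} := by

  classical
  set τ : Ω → ℝ≥0 := fun ω => (τ1 ω + τ2 ω) / 2 with hτdef
  have hτ1τ : τ1 ≤ τ := by
    intro ω
    rw [← NNReal.coe_le_coe]
    have h := (hτlt ω).2.le
    rw [← NNReal.coe_le_coe] at h
    simp only [hτdef, NNReal.coe_div, NNReal.coe_add]
    norm_num
    linarith
  have hττ2 : ∀ ω, τ ω < τ2 ω := by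
    intro ω
    rw [← NNReal.coe_lt_coe]
    have h := (hτlt ω).2
    have h0 := (hτlt ω).1
    rw [← NNReal.coe_lt_coe] at h h0
    simp only [hτdef, NNReal.coe_div, NNReal.coe_add]
    norm_num at h0 ⊢
    linarith
  have hτ2eq : τ2 = fun ω => 2 * τ ω - τ1 ω := by
    funext ω
    have : 2 * τ ω = τ1 ω + τ2 ω := by
      simp only [hτdef]
      rw [mul_comm, div_mul_cancel₀ _ (two_ne_zero)]
    rw [this, add_tsub_cancel_left]
  have hst1 : IsStoppingTime G (fun ω => ((τ1 ω : ℝ≥0) : WithTop ℝ≥0)) := by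
    intro t
    have : {ω | ((τ1 ω : ℝ≥0) : WithTop ℝ≥0) ≤ t} = X t ⁻¹' Set.Ici 1 := by
      ext ω; exact WithTop.coe_le_coe.trans (hτ1 t ω)
    rw [this]
    exact hGX t measurableSet_Ici
  have hst2 : IsStoppingTime G (fun ω => ((τ2 ω : ℝ≥0) : WithTop ℝ≥0)) := by
    intro t
    have : {ω | ((τ2 ω : ℝ≥0) : WithTop ℝ≥0) ≤ t} = X t ⁻¹' Set.Ici 2 := by
      ext ω; exact WithTop.coe_le_coe.trans (hτ2 t ω)
    rw [this]
    exact hGX t measurableSet_Ici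
  have hmτ : Measurable[hGτ.measurableSpace] τ := by
    refine measurable_of_Iic fun i => ?_
    convert hGτ.measurableSet_le' i using 1
    ext ω; exact (WithTop.coe_le_coe (b := τ ω) (a := i)).symm
  have hm1 : Measurable[hGτ.measurableSpace] τ1 := by
    have h1 : Measurable[hst1.measurableSpace] τ1 := by
      refine measurable_of_Iic fun i => ?_
      convert hst1.measurableSet_le' i using 1
      ext ω; exact (WithTop.coe_le_coe (b := τ1 ω) (a := i)).symm
    exact h1.mono (hst1.measurableSpace_mono hGτ fun ω => WithTop.coe_le_coe.mpr (hτ1τ ω)) le_rfl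
  have hm2 : Measurable[hGτ.measurableSpace] τ2 := by
    convert (hmτ.const_mul 2).sub hm1 using 1
    exact hτ2eq
  set c : ℕ → ℝ≥0 := fun n => ((n : ℝ≥0) + 1)⁻¹ with hcdef
  have hcpos : ∀ n, 0 < c n := fun n => by positivity
  set σ : ℕ → Ω → ℝ≥0 := fun n ω => max (τ ω) (τ2 ω - c n) with hσdef
  constructor
  · refine ⟨σ, ?_, ?_, ?_, ?_⟩
    · intro n t
      have hset : {ω | ((σ n ω : ℝ≥0) : WithTop ℝ≥0) ≤ t} =
          {ω | τ2 ω - c n ≤ t} ∩ {ω | ((τ ω : ℝ≥0) : WithTop ℝ≥0) ≤ t} := by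
        ext ω
        simp only [hσdef, Set.mem_setOf_eq, Set.mem_inter_iff, WithTop.coe_le_coe, max_le_iff,
          and_comm]
      rw [hset]
      have hA : MeasurableSet[hGτ.measurableSpace] {ω | τ2 ω - c n ≤ t} := by
        have : {ω | τ2 ω - c n ≤ t} = τ2 ⁻¹' Set.Iic (t + c n) := by
          ext ω
          simp [tsub_le_iff_right]
        rw [this]
        exact hm2 measurableSet_Iic
      exact ((hGτ.measurableSet _).mp hA).2 t
    · intro ω m n hmn
      refine max_le_max le_rfl (tsub_le_tsub_left ?_ _)
      have : (m : ℝ≥0) + 1 ≤ (n : ℝ≥0) + 1 := by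
        exact_mod_cast Nat.succ_le_succ hmn
      exact inv_anti₀ (by positivity) this
    · intro ω
      have hc0 : Tendsto c atTop (nhds (0 : ℝ≥0)) := by
        rw [← NNReal.tendsto_coe]
        simp only [hcdef, NNReal.coe_inv, NNReal.coe_add, NNReal.coe_natCast, NNReal.coe_one]
        simpa [one_div] using tendsto_one_div_add_atTop_nhds_zero_nat (𝕜 := ℝ)
      have h1 : Tendsto (fun n => τ2 ω - c n) atTop (nhds (τ2 ω)) := by
        have h1' : Tendsto (fun n => τ2 ω - c n) atTop (nhds (τ2 ω - 0)) :=
          Filter.Tendsto.sub (tendsto_const_nhds) hc0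
        simpa using h1'
      have h2 : Tendsto (fun n => max (τ ω) (τ2 ω - c n)) atTop
          (nhds (max (τ ω) (τ2 ω))) := tendsto_const_nhds.max h1
      rw [max_eq_right (hττ2 ω).le] at h2
      exact h2
    · intro n ω
      exact max_lt (hττ2 ω)
        (tsub_lt_self ((hτlt ω).1.trans (hτlt ω).2) (hcpos n))
  · have huniv : {ω | jmpN (fun u => X u ω) (τ2 ω) ≠ 0} = Set.univ := by
      ext ω
      simp [hjump2 ω]
    rw [huniv, measure_univ]
    norm_num
end
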